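/- The cross-product inequality implies the Kahn–Saks inequality: suppose that for every finite poset Q and distinct elements x, y, z of Q, writing F_Q(k,ℓ) for the number of linear extensions L of Q with L(y) - L(x) = k and L(z) - L(y) = ℓ, we have F_Q(k,ℓ)·F_Q(k+1,ℓ+1) ≤ F_Q(k,ℓ+1)·F_Q(k+1,ℓ) for all k, ℓ ≥ 1. Then for every finite poset P and distinct x, z in P, writing F_P(m) for the number of linear extensions L of P with L(z) - L(x) = m, we have F_P(m)² ≥ F_P(m-1)·F_P(m+1) for all m > 1. -/

import Mathlib

set_option linter.unusedSectionVars false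
set_option linter.unnecessarySimpa false

/-- `P` with a new incomparable element adjoined. -/
def Adj (P : Type) : Type := Option P

def Adj.some {P : Type} (u : P) : Adj P := Option.some u
def Adj.none {P : Type} : Adj P := Option.none

instance {P : Type} [Fintype P] : Fintype (Adj P) := inferInstanceAs (Fintype (Option P))

instance adjPartialOrder (P : Type) [PartialOrder P] : PartialOrder (Adj P) where
  le a b := match a, b with
    | Option.some u, Option.some v => u ≤ v
    | Option.none, Option.none => True
    | _, _ => False
  le_refl a := by cases a <;> simp
  le_trans a b c hab hbc := by
    cases a <;> cases b <;> cases c <;> simp_all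
    exact le_trans hab hbc
  le_antisymm a b hab hba := by
    cases a <;> cases b
    · rfl
    · exact absurd hab (by intro hh; exact hh)
    · exact absurd hab (by intro hh; exact hh)
    · exact congrArg Option.some (le_antisymm hab hba)

variable {P : Type} [PartialOrder P]

lemma adj_some_le_some {u v : P} : Adj.some u ≤ Adj.some v ↔ u ≤ v := Iff.rfl

lemma adj_some_lt_some {u v : P} : Adj.some u < Adj.some v ↔ u < v := by
  simp [lt_iff_le_not_ge, adj_some_le_some, _root_.lt_iff_le_not_ge]

lemma adj_lt {a b : Adj P} (h : a < b) :
    ∃ u v, a = Adj.some u ∧ b = Adj.some v ∧ u < v := by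
  cases a <;> cases b
  · exact absurd h (lt_irrefl _)
  · exact absurd h.le (by intro hh; exact hh)
  · exact absurd h.le (by intro hh; exact hh)
  · exact ⟨_, _, rfl, rfl, adj_some_lt_some.mp h⟩

lemma adj_card (P : Type) [Fintype P] : Fintype.card (Adj P) = Fintype.card P + 1 :=
  Fintype.card_option

lemma succAbove_val {n : ℕ} (p : Fin (n+1)) (j : Fin n) :
    ((p.succAbove j : Fin (n+1)) : ℕ) =
      if (j : ℕ) < (p : ℕ) then (j : ℕ) else (j : ℕ) + 1 := by
  rcases lt_or_ge (Fin.castSucc j) p with h | h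
  · rw [Fin.succAbove_of_castSucc_lt _ _ h]
    have : (j : ℕ) < (p : ℕ) := h
    simp [this]
  · rw [Fin.succAbove_of_le_castSucc _ _ h]
    have : ¬ (j : ℕ) < (p : ℕ) := not_lt.mpr h
    simp [this]

section Constructions
variable {P : Type} [Fintype P] [PartialOrder P]

/-- Recast a linear extension of `Adj P` to land in `Fin (card P + 1)`. -/
def ext2 (L' : Adj P ≃ Fin (Fintype.card (Adj P))) : Option P ≃ Fin (Fintype.card P + 1) :=
  show Adj P ≃ Fin (Fintype.card P + 1) from L'.trans (finCongr (adj_card P))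

lemma ext2_val (L' : Adj P ≃ Fin (Fintype.card (Adj P))) (w : Adj P) :
    ((ext2 L' w : Fin (Fintype.card P + 1)) : ℕ) = ((L' w : Fin (Fintype.card (Adj P))) : ℕ) :=
  rfl

/-- Remove the adjoined point from a linear extension of `Adj P`. -/
def fwdE (L' : Adj P ≃ Fin (Fintype.card (Adj P))) : P ≃ Fin (Fintype.card P) :=
  Equiv.removeNone ((ext2 L').trans (finSuccEquiv' (ext2 L' Adj.none)))

lemma fwdE_key (L' : Adj P ≃ Fin (Fintype.card (Adj P))) (u : P) :
    (ext2 L' Adj.none).succAbove (fwdE L' u) = ext2 L' (Adj.some u) := by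
  set p := ext2 L' Adj.none with hp
  show _ = ext2 L' (Option.some u)
  have hne : ext2 L' (Option.some u) ≠ p := by
    intro h
    have := (ext2 L').injective h
    simpa [Adj.none] using this
  have hsome : ∃ j, finSuccEquiv' p (ext2 L' (Option.some u)) = Option.some j := by
    rcases h : finSuccEquiv' p (ext2 L' (Option.some u)) with _ | j
    · exfalso
      apply hne
      have := congrArg (finSuccEquiv' p).symm h
      simpa [finSuccEquiv'_symm_none] using this
    · exact ⟨j, rfl⟩
  have h1 : Option.some (fwdE L' u) = finSuccEquiv' p (ext2 L' (Option.some u)) :=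
    Equiv.removeNone_some _ hsome
  have h2 := congrArg (finSuccEquiv' p).symm h1
  simpa [finSuccEquiv'_symm_some] using h2

/-- Insert the adjoined point at position `b` in a linear extension of `P`. -/
def bwdE (L : P ≃ Fin (Fintype.card P)) (b : Fin (Fintype.card P + 1)) :
    Adj P ≃ Fin (Fintype.card (Adj P)) :=
  show (Option P ≃ Fin (Fintype.card (Adj P))) from
    ((Equiv.optionCongr L).trans (finSuccEquiv' b).symm).trans (finCongr (adj_card P).symm)

lemma bwdE_none_val (L : P ≃ Fin (Fintype.card P)) (b : Fin (Fintype.card P + 1)) :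
    ((bwdE L b Adj.none : Fin (Fintype.card (Adj P))) : ℕ) = (b : ℕ) := by
  show ((finCongr (adj_card P).symm ((finSuccEquiv' b).symm
      (Equiv.optionCongr L Option.none)) : Fin _) : ℕ) = (b : ℕ)
  simp [finSuccEquiv'_symm_none]

lemma bwdE_some_val (L : P ≃ Fin (Fintype.card P)) (b : Fin (Fintype.card P + 1)) (u : P) :
    ((bwdE L b (Adj.some u) : Fin (Fintype.card (Adj P))) : ℕ) =
      if ((L u : Fin (Fintype.card P)) : ℕ) < (b : ℕ) then ((L u : Fin _) : ℕ)
      else ((L u : Fin _) : ℕ) + 1 := by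
  show ((finCongr (adj_card P).symm ((finSuccEquiv' b).symm
      (Equiv.optionCongr L (Option.some u))) : Fin _) : ℕ) = _
  simp only [Equiv.optionCongr_apply, Option.map_some, finSuccEquiv'_symm_some, finCongr_apply,
    Fin.coe_cast]
  exact succAbove_val b (L u)

end Constructions
section Transfer
variable {P : Type} [Fintype P] [PartialOrder P]

lemma fwd_props (x z : P) (k l : ℤ) (hk : 1 ≤ k) (hl : 1 ≤ l)
    (L' : Adj P ≃ Fin (Fintype.card (Adj P)))
    (hmono : ∀ u v : Adj P, u < v → L' u < L' v)
    (hx : ((L' Adj.none : ℕ) : ℤ) - ((L' (Adj.some x) : ℕ) : ℤ) = k)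
    (hz : ((L' (Adj.some z) : ℕ) : ℤ) - ((L' Adj.none : ℕ) : ℤ) = l) :
    (∀ u v : P, u < v → fwdE L' u < fwdE L' v) ∧
    ((fwdE L' z : ℕ) : ℤ) - ((fwdE L' x : ℕ) : ℤ) = k + l - 1 ∧
    ((fwdE L' x : ℕ) : ℤ) = ((L' (Adj.some x) : ℕ) : ℤ) ∧
    ((fwdE L' z : ℕ) : ℤ) + 1 = ((L' (Adj.some z) : ℕ) : ℤ) := by
  have hval : ∀ u : P,
      (if ((fwdE L' u : Fin _) : ℕ) < ((L' Adj.none : Fin _) : ℕ)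
        then ((fwdE L' u : Fin _) : ℕ) else ((fwdE L' u : Fin _) : ℕ) + 1)
        = ((L' (Adj.some u) : Fin _) : ℕ) := by
    intro u
    have h := congrArg Fin.val (fwdE_key L' u)
    rw [succAbove_val] at h
    rw [ext2_val, ext2_val] at h
    exact h
  have hmono' : ∀ u v : P, u < v → fwdE L' u < fwdE L' v := by
    intro u v huv
    have h := hmono _ _ (adj_some_lt_some.mpr huv)
    have h2 : (ext2 L' Adj.none).succAbove (fwdE L' u)
        < (ext2 L' Adj.none).succAbove (fwdE L' v) := by
      rw [fwdE_key L' u, fwdE_key L' v]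
      rw [Fin.lt_def, ext2_val, ext2_val]
      exact Fin.lt_def.mp h
    exact Fin.succAbove_lt_succAbove_iff.mp h2
  have hx' := hval x
  have hz' := hval z
  refine ⟨hmono', ?_⟩
  split_ifs at hx' hz' <;> omega

lemma bwd_bound (x z : P) (k l : ℤ) (hk : 1 ≤ k) (hl : 1 ≤ l)
    (L : P ≃ Fin (Fintype.card P))
    (hm : ((L z : ℕ) : ℤ) - ((L x : ℕ) : ℤ) = k + l - 1) :
    ((L x : Fin _) : ℕ) + k.toNat < Fintype.card P + 1 := by
  have h1 := (L z).isLt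
  have h2 : (k.toNat : ℤ) = k := Int.toNat_of_nonneg (by omega)
  omega

lemma bwd_props (x z : P) (k l : ℤ) (hk : 1 ≤ k) (hl : 1 ≤ l)
    (L : P ≃ Fin (Fintype.card P))
    (hmono : ∀ u v : P, u < v → L u < L v)
    (hm : ((L z : ℕ) : ℤ) - ((L x : ℕ) : ℤ) = k + l - 1)
    (b : Fin (Fintype.card P + 1)) (hb : (b : ℕ) = ((L x : Fin _) : ℕ) + k.toNat) :
    (∀ u v : Adj P, u < v → bwdE L b u < bwdE L b v) ∧
    ((bwdE L b Adj.none : ℕ) : ℤ) - ((bwdE L b (Adj.some x) : ℕ) : ℤ) = k ∧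
    ((bwdE L b (Adj.some z) : ℕ) : ℤ) - ((bwdE L b Adj.none : ℕ) : ℤ) = l := by
  have hkn : (k.toNat : ℤ) = k := Int.toNat_of_nonneg (by omega)
  refine ⟨?_, ?_, ?_⟩
  · intro a c hac
    obtain ⟨u, v, rfl, rfl, huv⟩ := adj_lt hac
    rw [Fin.lt_def, bwdE_some_val, bwdE_some_val]
    have h := Fin.lt_def.mp (hmono _ _ huv)
    split_ifs <;> omega
  · rw [bwdE_none_val, bwdE_some_val]
    split_ifs <;> omega
  · rw [bwdE_none_val, bwdE_some_val]
    split_ifs <;> omega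

lemma fwd_bwd (L : P ≃ Fin (Fintype.card P)) (b : Fin (Fintype.card P + 1)) (u : P) :
    fwdE (bwdE L b) u = L u := by
  have h := congrArg Fin.val (fwdE_key (bwdE L b) u)
  rw [succAbove_val, ext2_val, ext2_val, bwdE_none_val, bwdE_some_val] at h
  apply Fin.ext
  split_ifs at h <;> omega

lemma bwd_fwd (L' : Adj P ≃ Fin (Fintype.card (Adj P))) (b : Fin (Fintype.card P + 1))
    (hb : (b : ℕ) = ((L' Adj.none : Fin _) : ℕ)) (w : Adj P) :
    bwdE (fwdE L') b w = L' w := by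
  apply Fin.ext
  cases w
  · exact (bwdE_none_val (fwdE L') b).trans hb
  · rename_i u
    have h := congrArg Fin.val (fwdE_key L' u)
    rw [succAbove_val, ext2_val, ext2_val] at h
    have h2 := bwdE_some_val (fwdE L') b u
    rw [hb] at h2
    exact h2.trans h

end Transfer


/-- Number of linear extensions `L` with `L(y) - L(x) = k` and `L(z) - L(y) = l`. -/
noncomputable def numExt2 {X : Type} [Fintype X] [PartialOrder X]
    (x y z : X) (k l : ℤ) : ℕ :=
  Nat.card {L : X ≃ Fin (Fintype.card X) //
    (∀ u v : X, u < v → L u < L v) ∧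
    ((L y : ℕ) : ℤ) - ((L x : ℕ) : ℤ) = k ∧
    ((L z : ℕ) : ℤ) - ((L y : ℕ) : ℤ) = l}

/-- Number of linear extensions `L` with `L(z) - L(x) = m`. -/
noncomputable def numExt1 {X : Type} [Fintype X] [PartialOrder X]
    (x z : X) (m : ℤ) : ℕ :=
  Nat.card {L : X ≃ Fin (Fintype.card X) //
    (∀ u v : X, u < v → L u < L v) ∧
    ((L z : ℕ) : ℤ) - ((L x : ℕ) : ℤ) = m}

lemma count_eq (P : Type) [Fintype P] [PartialOrder P] (x z : P) (k l : ℤ)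
    (hk : 1 ≤ k) (hl : 1 ≤ l) :
    numExt2 (Adj.some x) Adj.none (Adj.some z) k l = numExt1 x z (k + l - 1) := by
  unfold numExt2 numExt1
  apply Nat.card_congr
  refine Equiv.mk
    (fun Lp => ⟨fwdE Lp.1,
      (fwd_props x z k l hk hl Lp.1 Lp.2.1 Lp.2.2.1 Lp.2.2.2).1,
      (fwd_props x z k l hk hl Lp.1 Lp.2.1 Lp.2.2.1 Lp.2.2.2).2.1⟩)
    (fun Lp => ⟨bwdE Lp.1 ⟨((Lp.1 x : Fin _) : ℕ) + k.toNat,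
        bwd_bound x z k l hk hl Lp.1 Lp.2.2⟩,
      bwd_props x z k l hk hl Lp.1 Lp.2.1 Lp.2.2 _ rfl⟩)
    ?_ ?_
  · rintro ⟨L', hmono, hx, hz⟩
    apply Subtype.ext
    apply Equiv.ext
    intro w
    refine bwd_fwd L' _ ?_ w
    have h3 := (fwd_props x z k l hk hl L' hmono hx hz).2.2.1
    have hkn : (k.toNat : ℤ) = k := Int.toNat_of_nonneg (by omega)
    show ((fwdE L' x : Fin _) : ℕ) + k.toNat = _
    omega
  · rintro ⟨L, hmono, hm⟩
    apply Subtype.ext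
    apply Equiv.ext
    intro u
    exact fwd_bwd L _ u


/-- The cross–product inequality (assumed for all finite posets) implies
the Kahn–Saks inequality. -/
theorem cross_product_implies_kahn_saks
    (H : ∀ (Q : Type) [Fintype Q] [PartialOrder Q],
      ∀ x y z : Q, x ≠ y → x ≠ z → y ≠ z →
      ∀ k l : ℤ, 1 ≤ k → 1 ≤ l →
        numExt2 x y z k l * numExt2 x y z (k + 1) (l + 1) ≤
          numExt2 x y z k (l + 1) * numExt2 x y z (k + 1) l) :
    ∀ (P : Type) [Fintype P] [PartialOrder P],
      ∀ x z : P, x ≠ z → ∀ m : ℤ, 1 < m →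
        numExt1 x z (m - 1) * numExt1 x z (m + 1) ≤ numExt1 x z m * numExt1 x z m := by
  intro P _ _ x z hxz m hm
  have hxy : Adj.some x ≠ (Adj.none : Adj P) := by
    intro h; exact Option.some_ne_none x h
  have hyz : (Adj.none : Adj P) ≠ Adj.some z := by
    intro h; exact Option.some_ne_none z h.symm
  have hxz' : Adj.some x ≠ Adj.some z := by
    intro h; exact hxz (Option.some_injective _ h)
  have h := H (Adj P) (Adj.some x) Adj.none (Adj.some z) hxy hxz' hyz
    (m - 1) 1 (by omega) (by omega)
  rw [count_eq P x z (m - 1) 1 (by omega) (by omega),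
    count_eq P x z (m - 1 + 1) (1 + 1) (by omega) (by omega),
    count_eq P x z (m - 1) (1 + 1) (by omega) (by omega),
    count_eq P x z (m - 1 + 1) 1 (by omega) (by omega)] at h
  have e1 : m - 1 + 1 - 1 = m - 1 := by ring
  have e2 : m - 1 + 1 + (1 + 1) - 1 = m + 1 := by ring
  have e3 : m - 1 + (1 + 1) - 1 = m := by ring
  have e4 : m - 1 + 1 + 1 - 1 = m := by ring
  rw [e1, e2, e3, e4] at h
  exact h
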